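/- Let 𝒜 ∈ ℝ^{n₁×n₂×n₃} be nonzero and (x₁⁰, x₂⁰, x₃⁰) be generated by Algorithm B: among all mode-(2,3) slices 𝒜(e₁^{i₁},·,·) ∈ ℝ^{n₂×n₃}, select index ī₁ maximizing the largest singular value with optimal singular vector pair (x̄₂, x̄₃); set x₃⁰ to the normalized r₃-truncation of x̄₃; then update x₂⁰ and x₁⁰ as normalized truncations of 𝒜(e₁^{ī₁},·,x₃⁰) and 𝒜(·,x₂⁰,x₃⁰) respectively. Then 𝒜(x₁⁰,x₂⁰,x₃⁰) ≥ √(r₂r₃/(n₂n₃r₁)) · v_opt, where v_opt is the maximum of 𝒜(x₁,x₂,x₃) over unit vectors x_j with ‖x_j‖₀ ≤ r_j. -/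

import Mathlib

open Finset

noncomputable def enorm2 {ι : Type*} [Fintype ι] (x : ι → ℝ) : ℝ :=
  Real.sqrt (∑ i, x i ^ 2)

def dot {ι : Type*} [Fintype ι] (x y : ι → ℝ) : ℝ := ∑ i, x i * y i

noncomputable def l0 {ι : Type*} [Fintype ι] (x : ι → ℝ) : ℕ :=
  (Finset.univ.filter fun i => x i ≠ 0).card

def IsTrunc {ι : Type*} [Fintype ι] [DecidableEq ι] (a : ι → ℝ) (r : ℕ) (ar : ι → ℝ) : Prop :=
  ∃ S : Finset ι, S.card = r ∧ (∀ i ∈ S, ar i = a i) ∧ (∀ i ∉ S, ar i = 0) ∧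
    ∀ i ∈ S, ∀ j ∉ S, |a j| ≤ |a i|

noncomputable def lmax {m n' : Type*} [Fintype m] [Fintype n'] (A : Matrix m n' ℝ) : ℝ :=
  sSup {c | ∃ x : n' → ℝ, enorm2 x = 1 ∧ c = enorm2 (A.mulVec x)}

noncomputable def fnorm {m n' : Type*} [Fintype m] [Fintype n'] (A : Matrix m n' ℝ) : ℝ :=
  Real.sqrt (∑ i, ∑ j, A i j ^ 2)

def tri {n1 n2 n3 : ℕ} (A : Fin n1 → Fin n2 → Fin n3 → ℝ)
    (x : Fin n1 → ℝ) (y : Fin n2 → ℝ) (z : Fin n3 → ℝ) : ℝ :=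
  ∑ i, ∑ j, ∑ k, A i j k * x i * y j * z k

def mlin {d : ℕ} {n : Fin d → ℕ} (A : (∀ j, Fin (n j)) → ℝ)
    (x : ∀ j, Fin (n j) → ℝ) : ℝ :=
  ∑ i, A i * ∏ j, x j (i j)

section helpers

variable {ι : Type*} [Fintype ι]

lemma enorm_nonneg' (x : ι → ℝ) : 0 ≤ enorm2 x := Real.sqrt_nonneg _

lemma sq_enorm (x : ι → ℝ) : enorm2 x ^ 2 = ∑ i, x i ^ 2 :=
  Real.sq_sqrt (Finset.sum_nonneg fun i _ => sq_nonneg _)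

lemma abs_dot_le (x y : ι → ℝ) : |dot x y| ≤ enorm2 x * enorm2 y := by
  have h := Finset.sum_mul_sq_le_sq_mul_sq Finset.univ x y
  have h2 : |dot x y| = Real.sqrt ((dot x y) ^ 2) := (Real.sqrt_sq_eq_abs _).symm
  rw [h2, enorm2, enorm2, ← Real.sqrt_mul (Finset.sum_nonneg fun i _ => sq_nonneg _)]
  exact Real.sqrt_le_sqrt h

lemma dot_le (x y : ι → ℝ) : dot x y ≤ enorm2 x * enorm2 y :=
  le_trans (le_abs_self _) (abs_dot_le x y)

lemma enorm_eq_zero_iff (x : ι → ℝ) : enorm2 x = 0 ↔ x = 0 := by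
  constructor
  · intro h
    have h0 : ∑ i, x i ^ 2 = 0 := by
      have := Real.sqrt_eq_zero (Finset.sum_nonneg fun i _ => sq_nonneg _) |>.mp h
      exact this
    funext i
    have := (Finset.sum_eq_zero_iff_of_nonneg (fun i _ => sq_nonneg (x i))).mp h0 i (mem_univ i)
    exact pow_eq_zero_iff (n := 2) (by norm_num) |>.mp this
  · rintro rfl; simp [enorm2]

lemma mulVec_bound {m n' : Type*} [Fintype m] [Fintype n'] (M : Matrix m n' ℝ) (x : n' → ℝ) :
    enorm2 (M.mulVec x) ≤ fnorm M * enorm2 x := by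
  have h1 : ∀ i, (M.mulVec x) i ^ 2 ≤ (∑ j, M i j ^ 2) * ∑ j, x j ^ 2 := by
    intro i
    have : M.mulVec x i = ∑ j, M i j * x j := by
      simp [Matrix.mulVec, dotProduct]
    rw [this]
    exact Finset.sum_mul_sq_le_sq_mul_sq Finset.univ (M i) x
  have h2 : ∑ i, (M.mulVec x) i ^ 2 ≤ (∑ i, ∑ j, M i j ^ 2) * ∑ j, x j ^ 2 := by
    rw [Finset.sum_mul]
    exact Finset.sum_le_sum fun i _ => h1 i
  calc enorm2 (M.mulVec x) = Real.sqrt (∑ i, (M.mulVec x) i ^ 2) := rfl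
    _ ≤ Real.sqrt ((∑ i, ∑ j, M i j ^ 2) * ∑ j, x j ^ 2) := Real.sqrt_le_sqrt h2
    _ = fnorm M * enorm2 x := Real.sqrt_mul (Finset.sum_nonneg fun i _ =>
        Finset.sum_nonneg fun j _ => sq_nonneg _) _

lemma le_lmax {m n' : Type*} [Fintype m] [Fintype n'] (M : Matrix m n' ℝ) (x : n' → ℝ)
    (hx : enorm2 x = 1) : enorm2 (M.mulVec x) ≤ lmax M := by
  apply le_csSup
  · refine ⟨fnorm M, ?_⟩
    rintro c ⟨z, hz, rfl⟩
    simpa [hz] using mulVec_bound M z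
  · exact ⟨x, hx, rfl⟩

lemma lmax_nonneg {m n' : Type*} [Fintype m] [Fintype n'] (M : Matrix m n' ℝ) : 0 ≤ lmax M :=
  Real.sSup_nonneg (by rintro c ⟨x, hx, rfl⟩; exact enorm_nonneg' _)

variable [DecidableEq ι] in
lemma trunc_dot {a ar : ι → ℝ} {r : ℕ} (ht : IsTrunc a r ar) :
    dot a ar = ∑ i, ar i ^ 2 := by
  obtain ⟨S, hcard, hin, hout, hmax⟩ := ht
  have h1 : dot a ar = ∑ i ∈ S, a i * ar i := by
    rw [dot]
    refine (Finset.sum_subset (Finset.subset_univ S) ?_).symm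
    intro i _ hi; rw [hout i hi]; ring
  have h2 : ∑ i, ar i ^ 2 = ∑ i ∈ S, ar i ^ 2 := by
    refine (Finset.sum_subset (Finset.subset_univ S) ?_).symm
    intro i _ hi; rw [hout i hi]; ring
  rw [h1, h2]
  exact Finset.sum_congr rfl fun i hi => by rw [hin i hi]; ring

variable [DecidableEq ι] in
lemma trunc_lower {a ar : ι → ℝ} {r : ℕ} (ht : IsTrunc a r ar) (hr : 1 ≤ r) :
    (r : ℝ) * ∑ i, a i ^ 2 ≤ (Fintype.card ι : ℝ) * ∑ i, ar i ^ 2 := by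
  obtain ⟨S, hcard, hin, hout, hmax⟩ := ht
  have hSne : S.Nonempty := Finset.card_pos.mp (by omega)
  obtain ⟨i0, hi0S, hi0min⟩ := S.exists_min_image (fun i => |a i|) hSne
  set m := a i0 ^ 2 with hm
  have hrle : S.card ≤ Fintype.card ι := Finset.card_le_univ S
  have hrn : (r : ℝ) ≤ Fintype.card ι := by exact_mod_cast hcard ▸ hrle
  have hsum_ar : ∑ i, ar i ^ 2 = ∑ i ∈ S, a i ^ 2 := by
    rw [← Finset.sum_subset (Finset.subset_univ S) (fun i _ hi => by rw [hout i hi]; ring)]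
    exact Finset.sum_congr rfl fun i hi => by rw [hin i hi]
  have hsplit : ∑ i, a i ^ 2 = ∑ i ∈ S, a i ^ 2 + ∑ i ∈ Sᶜ, a i ^ 2 :=
    (Finset.sum_add_sum_compl S _).symm
  have hout_le : ∑ i ∈ Sᶜ, a i ^ 2 ≤ ((Fintype.card ι : ℝ) - r) * m := by
    have hterm : ∀ i ∈ Sᶜ, a i ^ 2 ≤ m := by
      intro i hi
      have h := hmax i0 hi0S i (Finset.mem_compl.mp hi)
      calc a i ^ 2 = |a i| ^ 2 := (sq_abs _).symm
        _ ≤ |a i0| ^ 2 := pow_le_pow_left₀ (abs_nonneg _) h 2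
        _ = m := sq_abs _
    calc ∑ i ∈ Sᶜ, a i ^ 2 ≤ ∑ _i ∈ Sᶜ, m := Finset.sum_le_sum hterm
      _ = (Sᶜ.card : ℝ) * m := by rw [Finset.sum_const, nsmul_eq_mul]
      _ = ((Fintype.card ι : ℝ) - r) * m := by
          rw [Finset.card_compl, hcard, Nat.cast_sub (hcard ▸ hrle)]
  have hin_ge : (r : ℝ) * m ≤ ∑ i ∈ S, a i ^ 2 := by
    have hterm : ∀ i ∈ S, m ≤ a i ^ 2 := by
      intro i hi
      calc m = |a i0| ^ 2 := (sq_abs _).symm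
        _ ≤ |a i| ^ 2 := pow_le_pow_left₀ (abs_nonneg _) (hi0min i hi) 2
        _ = a i ^ 2 := sq_abs _
    calc (r : ℝ) * m = (S.card : ℝ) * m := by rw [hcard]
      _ = ∑ _i ∈ S, m := by rw [Finset.sum_const, nsmul_eq_mul]
      _ ≤ _ := Finset.sum_le_sum hterm
  have hm0 : 0 ≤ m := sq_nonneg _
  rw [hsum_ar, hsplit]
  nlinarith [mul_le_mul_of_nonneg_left hout_le (by positivity : (0:ℝ) ≤ (r:ℝ)),
    mul_le_mul_of_nonneg_left hin_ge (sub_nonneg.mpr hrn)]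

variable [DecidableEq ι] in
lemma trunc_entry {a ar : ι → ℝ} {r : ℕ} (ht : IsTrunc a r ar) (hr : 1 ≤ r) (i : ι) :
    a i ^ 2 ≤ ∑ j, ar j ^ 2 := by
  obtain ⟨S, hcard, hin, hout, hmax⟩ := ht
  have hsum : ∀ i0 ∈ S, a i0 ^ 2 ≤ ∑ j, ar j ^ 2 := by
    intro i0 hi0
    have : ar i0 ^ 2 ≤ ∑ j, ar j ^ 2 :=
      Finset.single_le_sum (fun j _ => sq_nonneg (ar j)) (mem_univ i0)
    rwa [hin i0 hi0] at this
  by_cases hi : i ∈ S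
  · exact hsum i hi
  · obtain ⟨i0, hi0S⟩ := Finset.card_pos.mp (hcard ▸ hr : 0 < S.card)
    have h := hmax i0 hi0S i hi
    calc a i ^ 2 = |a i| ^ 2 := (sq_abs _).symm
      _ ≤ |a i0| ^ 2 := pow_le_pow_left₀ (abs_nonneg _) h 2
      _ = a i0 ^ 2 := sq_abs _
      _ ≤ _ := hsum i0 hi0S

lemma l1_le_sqrt_l0 (y : ι → ℝ) : ∑ i, |y i| ≤ Real.sqrt (l0 y) * enorm2 y := by
  classical
  set S := Finset.univ.filter fun i => y i ≠ 0 with hS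
  have h1 : ∑ i, |y i| = ∑ i ∈ S, |y i| := by
    refine (Finset.sum_subset (Finset.subset_univ S) ?_).symm
    intro i _ hi
    have : y i = 0 := by
      by_contra h; exact hi (Finset.mem_filter.mpr ⟨mem_univ i, h⟩)
    simp [this]
  have hcs : (∑ i ∈ S, 1 * |y i|) ^ 2 ≤ (∑ i ∈ S, (1:ℝ) ^ 2) * ∑ i ∈ S, |y i| ^ 2 :=
    Finset.sum_mul_sq_le_sq_mul_sq S 1 (fun i => |y i|)
  have h2 : ∑ i ∈ S, |y i| ^ 2 ≤ ∑ i, y i ^ 2 := by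
    calc ∑ i ∈ S, |y i| ^ 2 = ∑ i ∈ S, y i ^ 2 := by
          exact Finset.sum_congr rfl fun i _ => sq_abs _
      _ ≤ ∑ i, y i ^ 2 := Finset.sum_le_sum_of_subset_of_nonneg (Finset.subset_univ S)
          (fun i _ _ => sq_nonneg _)
  have h3 : (∑ i ∈ S, |y i|) ^ 2 ≤ (S.card : ℝ) * ∑ i, y i ^ 2 := by
    have : (∑ i ∈ S, (1:ℝ) ^ 2) = (S.card : ℝ) := by simp
    calc (∑ i ∈ S, |y i|) ^ 2 = (∑ i ∈ S, 1 * |y i|) ^ 2 := by simp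
      _ ≤ (∑ i ∈ S, (1:ℝ) ^ 2) * ∑ i ∈ S, |y i| ^ 2 := hcs
      _ = (S.card : ℝ) * ∑ i ∈ S, |y i| ^ 2 := by rw [this]
      _ ≤ (S.card : ℝ) * ∑ i, y i ^ 2 := by
          exact mul_le_mul_of_nonneg_left h2 (Nat.cast_nonneg _)
  have h4 : ∑ i ∈ S, |y i| ≤ Real.sqrt ((S.card : ℝ) * ∑ i, y i ^ 2) := by
    rw [← Real.sqrt_sq (Finset.sum_nonneg fun i _ => abs_nonneg (y i))]
    exact Real.sqrt_le_sqrt h3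
  rw [h1]
  calc ∑ i ∈ S, |y i| ≤ Real.sqrt ((S.card : ℝ) * ∑ i, y i ^ 2) := h4
    _ = Real.sqrt (S.card : ℝ) * enorm2 y := Real.sqrt_mul (Nat.cast_nonneg _) _
    _ = Real.sqrt (l0 y) * enorm2 y := by rw [l0, hS]

end helpers

/-- Theorem 3.2: approximation bound of Algorithm B for d = 3:
𝒜(x₁⁰,x₂⁰,x₃⁰) ≥ √(r₂r₃/(n₂n₃r₁))·v_opt. -/
theorem stmt_19 {n1 n2 n3 : ℕ} (A : Fin n1 → Fin n2 → Fin n3 → ℝ) (hA : A ≠ 0)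
    (r1 r2 r3 : ℕ) (hr1 : 1 ≤ r1 ∧ r1 ≤ n1) (hr2 : 1 ≤ r2 ∧ r2 ≤ n2)
    (hr3 : 1 ≤ r3 ∧ r3 ≤ n3)
    -- step 1-2: select the slice with largest spectral norm, with its
    -- normalized leading singular vector pair (xb2, xb3)
    (i1b : Fin n1)
    (hsel : ∀ i1, lmax (Matrix.of (A i1)) ≤ lmax (Matrix.of (A i1b)))
    (xb2 : Fin n2 → ℝ) (xb3 : Fin n3 → ℝ)
    (hxb2 : enorm2 xb2 = 1) (hxb3 : enorm2 xb3 = 1)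
    (hsv1 : (Matrix.of (A i1b)).mulVec xb3 = fun j => lmax (Matrix.of (A i1b)) * xb2 j)
    (hsv2 : (Matrix.of (A i1b)).transpose.mulVec xb2 = fun k => lmax (Matrix.of (A i1b)) * xb3 k)
    (t3 : Fin n3 → ℝ) (ht3 : IsTrunc xb3 r3 t3)
    (x3 : Fin n3 → ℝ) (hx3 : x3 = fun k => t3 k / enorm2 t3)
    -- step 3: sequential truncated updates
    (t2 : Fin n2 → ℝ) (ht2 : IsTrunc (fun j => ∑ k, A i1b j k * x3 k) r2 t2)
    (x2 : Fin n2 → ℝ) (hx2 : x2 = fun j => t2 j / enorm2 t2)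
    (t1 : Fin n1 → ℝ) (ht1 : IsTrunc (fun i => ∑ j, ∑ k, A i j k * x2 j * x3 k) r1 t1)
    (x1 : Fin n1 → ℝ) (hx1 : x1 = fun i => t1 i / enorm2 t1) :
    ∀ y1 y2 y3, enorm2 y1 = 1 → l0 y1 ≤ r1 → enorm2 y2 = 1 → l0 y2 ≤ r2 →
      enorm2 y3 = 1 → l0 y3 ≤ r3 →
      Real.sqrt ((r2 : ℝ) * r3 / ((n2 : ℝ) * n3 * r1)) * tri A y1 y2 y3 ≤
        tri A x1 x2 x3 := by
  intro y1 y2 y3 hy1 hl1 hy2 hl2 hy3 hl3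
  obtain ⟨hr11, hr12⟩ := hr1
  obtain ⟨hr21, hr22⟩ := hr2
  obtain ⟨hr31, hr32⟩ := hr3
  have hn1 : 0 < n1 := lt_of_lt_of_le hr11 hr12
  have hn2 : 0 < n2 := lt_of_lt_of_le hr21 hr22
  have hn3 : 0 < n3 := lt_of_lt_of_le hr31 hr32
  have hn2R : (0:ℝ) < n2 := by exact_mod_cast hn2
  have hn3R : (0:ℝ) < n3 := by exact_mod_cast hn3
  have hr1R : (0:ℝ) < r1 := by exact_mod_cast hr11
  have hr2R : (0:ℝ) < r2 := by exact_mod_cast hr21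
  have hr3R : (0:ℝ) < r3 := by exact_mod_cast hr31
  set lam := lmax (Matrix.of (A i1b)) with hlam
  have hlam0 : 0 ≤ lam := lmax_nonneg _
  -- λ > 0 since A ≠ 0
  have hlampos : 0 < lam := by
    rcases hlam0.lt_or_eq with h | h
    · exact h
    exfalso
    apply hA
    funext i j k
    have hle : lmax (Matrix.of (A i)) ≤ 0 := le_trans (hsel i) (h.symm.le)
    set e : Fin n3 → ℝ := fun k' => if k' = k then 1 else 0 with he
    have hene : enorm2 e = 1 := by
      have hsq : ∀ k', e k' ^ 2 = if k' = k then 1 else 0 := by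
        intro k'; rw [he]; by_cases hk : k' = k <;> simp [hk]
      rw [enorm2]
      rw [Finset.sum_congr rfl fun k' _ => hsq k']
      rw [Finset.sum_ite_eq' Finset.univ k (fun _ => (1:ℝ))]
      simp
    have h1 : enorm2 ((Matrix.of (A i)).mulVec e) ≤ 0 := le_trans (le_lmax _ _ hene) hle
    have h2 : (Matrix.of (A i)).mulVec e = 0 :=
      (enorm_eq_zero_iff _).mp (le_antisymm h1 (enorm_nonneg' _))
    have h3 : (Matrix.of (A i)).mulVec e j = 0 := congrFun h2 j
    have h4 : A i j k = 0 := by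
      simpa [Matrix.mulVec, dotProduct, he] using h3
    simpa using h4
  -- norms of truncations
  set c3 := enorm2 t3 with hc3
  have hxb3sq : ∑ k, xb3 k ^ 2 = 1 := by
    have h := sq_enorm xb3; rw [hxb3] at h; rw [← h]; norm_num
  have ht3low := trunc_lower ht3 hr31
  rw [hxb3sq, mul_one] at ht3low
  have hc3sq : c3 ^ 2 = ∑ k, t3 k ^ 2 := sq_enorm t3
  have hc3pos : 0 < c3 := by
    rw [hc3, enorm2]
    apply Real.sqrt_pos.mpr
    have hcard : ((Fintype.card (Fin n3) : ℝ)) = n3 := by simp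
    nlinarith [ht3low, hcard ▸ ht3low]
  have hc3lb : Real.sqrt ((r3:ℝ)/n3) ≤ c3 := by
    have h : (r3:ℝ)/n3 ≤ c3 ^ 2 := by
      rw [hc3sq, div_le_iff₀ hn3R]
      have hcard : ((Fintype.card (Fin n3) : ℝ)) = n3 := by simp
      rw [hcard] at ht3low
      linarith [ht3low]
    calc Real.sqrt ((r3:ℝ)/n3) ≤ Real.sqrt (c3 ^ 2) := Real.sqrt_le_sqrt h
      _ = c3 := Real.sqrt_sq hc3pos.le
  -- the vector w = A(i1b, ·, x3)
  set w : Fin n2 → ℝ := fun j => ∑ k, A i1b j k * x3 k with hw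
  have hk2 : ∀ k, (∑ j, A i1b j k * xb2 j) = lam * xb3 k := by
    intro k
    have h := congrFun hsv2 k
    simpa [Matrix.mulVec, dotProduct, Matrix.transpose, mul_comm] using h
  have hd33 : dot xb3 x3 = c3 := by
    simp only [dot, hx3]
    have h : (∑ k, xb3 k * (t3 k / c3)) = (∑ k, xb3 k * t3 k) / c3 := by
      rw [Finset.sum_div]; exact Finset.sum_congr rfl fun k _ => (mul_div_assoc _ _ _).symm
    rw [h]
    have hdt := trunc_dot ht3
    rw [dot] at hdt
    rw [hdt, ← hc3sq, sq, mul_div_assoc, div_self hc3pos.ne', mul_one]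
  have hdw : dot xb2 w = lam * c3 := by
    have h1 : dot xb2 w = ∑ k, (∑ j, A i1b j k * xb2 j) * x3 k := by
      rw [dot]
      calc ∑ j, xb2 j * w j = ∑ j, ∑ k, A i1b j k * xb2 j * x3 k := by
            refine Finset.sum_congr rfl fun j _ => ?_
            simp only [hw]
            rw [Finset.mul_sum]
            exact Finset.sum_congr rfl fun k _ => by ring
        _ = ∑ k, ∑ j, A i1b j k * xb2 j * x3 k := Finset.sum_comm
        _ = ∑ k, (∑ j, A i1b j k * xb2 j) * x3 k := by
            refine Finset.sum_congr rfl fun k _ => ?_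
            rw [Finset.sum_mul]
    rw [h1]
    calc ∑ k, (∑ j, A i1b j k * xb2 j) * x3 k = ∑ k, (lam * xb3 k) * x3 k :=
          Finset.sum_congr rfl fun k _ => by rw [hk2 k]
      _ = lam * dot xb3 x3 := by
          rw [dot, Finset.mul_sum]; exact Finset.sum_congr rfl fun k _ => by ring
      _ = lam * c3 := by rw [hd33]
  have hwlb : lam * c3 ≤ enorm2 w := by
    calc lam * c3 = dot xb2 w := hdw.symm
      _ ≤ enorm2 xb2 * enorm2 w := dot_le _ _
      _ = enorm2 w := by rw [hxb2, one_mul]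
  have hwpos : 0 < enorm2 w := lt_of_lt_of_le (mul_pos hlampos hc3pos) hwlb
  -- c2
  set c2 := enorm2 t2 with hc2
  have hc2sq : c2 ^ 2 = ∑ j, t2 j ^ 2 := sq_enorm t2
  have ht2low := trunc_lower ht2 hr21
  have hwsq : enorm2 w ^ 2 = ∑ j, w j ^ 2 := sq_enorm w
  have hc2lb : Real.sqrt ((r2:ℝ)/n2) * enorm2 w ≤ c2 := by
    have h : (r2:ℝ)/n2 * enorm2 w ^ 2 ≤ c2 ^ 2 := by
      rw [hwsq, hc2sq, div_mul_eq_mul_div, div_le_iff₀ hn2R]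
      have hcard : ((Fintype.card (Fin n2) : ℝ)) = n2 := by simp
      rw [hcard] at ht2low
      linarith [ht2low]
    calc Real.sqrt ((r2:ℝ)/n2) * enorm2 w = Real.sqrt ((r2:ℝ)/n2 * enorm2 w ^ 2) := by
          rw [Real.sqrt_mul (by positivity), Real.sqrt_sq (enorm_nonneg' w)]
      _ ≤ Real.sqrt (c2 ^ 2) := Real.sqrt_le_sqrt h
      _ = c2 := Real.sqrt_sq (by rw [hc2]; exact enorm_nonneg' t2)
  have hsq2pos : 0 < Real.sqrt ((r2:ℝ)/n2) := Real.sqrt_pos.mpr (div_pos hr2R hn2R)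
  have hc2pos : 0 < c2 := lt_of_lt_of_le (mul_pos hsq2pos hwpos) hc2lb
  -- u
  set u : Fin n1 → ℝ := fun i => ∑ j, ∑ k, A i j k * x2 j * x3 k with hu
  have hu_i1b : u i1b = c2 := by
    have h1 : u i1b = dot x2 w := by
      simp only [hu, dot]
      refine Finset.sum_congr rfl fun j _ => ?_
      simp only [hw]
      rw [Finset.mul_sum]
      exact Finset.sum_congr rfl fun k _ => by ring
    have h2 : dot x2 w = c2 := by
      simp only [dot, hx2]
      have h : (∑ j, t2 j / c2 * w j) = (∑ j, w j * t2 j) / c2 := by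
        rw [Finset.sum_div]; exact Finset.sum_congr rfl fun j _ => by ring
      rw [h]
      have hdt := trunc_dot ht2
      rw [dot] at hdt
      rw [hdt, ← hc2sq, sq, mul_div_assoc, div_self hc2pos.ne', mul_one]
    rw [h1, h2]
  -- c1
  set c1 := enorm2 t1 with hc1
  have hc1sq : c1 ^ 2 = ∑ i, t1 i ^ 2 := sq_enorm t1
  have hc1nn : 0 ≤ c1 := by rw [hc1]; exact enorm_nonneg' t1
  have hc1ge : c2 ≤ c1 := by
    have h : c2 ^ 2 ≤ c1 ^ 2 := by
      rw [hc1sq, ← hu_i1b]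
      exact trunc_entry ht1 hr11 i1b
    have h2 := Real.sqrt_le_sqrt h
    rwa [Real.sqrt_sq hc2pos.le, Real.sqrt_sq hc1nn] at h2
  have hc1pos : 0 < c1 := lt_of_lt_of_le hc2pos hc1ge
  -- value of the algorithm
  have htri : tri A x1 x2 x3 = c1 := by
    rw [tri]
    have h1 : ∑ i, ∑ j, ∑ k, A i j k * x1 i * x2 j * x3 k = ∑ i, x1 i * u i := by
      refine Finset.sum_congr rfl fun i _ => ?_
      simp only [hu, Finset.mul_sum]
      refine Finset.sum_congr rfl fun j _ => ?_
      refine Finset.sum_congr rfl fun k _ => ?_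
      ring
    rw [h1]
    simp only [hx1]
    have h : (∑ i, t1 i / c1 * u i) = (∑ i, u i * t1 i) / c1 := by
      rw [Finset.sum_div]; exact Finset.sum_congr rfl fun i _ => by ring
    rw [h]
    have hdt := trunc_dot ht1
    rw [dot] at hdt
    rw [hdt, ← hc1sq, sq, mul_div_assoc, div_self hc1pos.ne', mul_one]
  -- upper bound on any feasible value
  have hup : tri A y1 y2 y3 ≤ Real.sqrt r1 * lam := by
    have hbound : ∀ i, |dot y2 ((Matrix.of (A i)).mulVec y3)| ≤ lam := by
      intro i
      calc |dot y2 ((Matrix.of (A i)).mulVec y3)|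
          ≤ enorm2 y2 * enorm2 ((Matrix.of (A i)).mulVec y3) := abs_dot_le _ _
        _ = enorm2 ((Matrix.of (A i)).mulVec y3) := by rw [hy2, one_mul]
        _ ≤ lmax (Matrix.of (A i)) := le_lmax _ _ hy3
        _ ≤ lam := hsel i
    have h1 : tri A y1 y2 y3 = ∑ i, y1 i * dot y2 ((Matrix.of (A i)).mulVec y3) := by
      rw [tri]
      refine Finset.sum_congr rfl fun i _ => ?_
      simp only [dot, Matrix.mulVec, dotProduct, Matrix.of_apply, Finset.mul_sum]
      refine Finset.sum_congr rfl fun j _ => ?_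
      refine Finset.sum_congr rfl fun k _ => ?_
      ring
    rw [h1]
    calc ∑ i, y1 i * dot y2 ((Matrix.of (A i)).mulVec y3)
        ≤ ∑ i, |y1 i| * lam := by
          refine Finset.sum_le_sum fun i _ => ?_
          calc y1 i * dot y2 ((Matrix.of (A i)).mulVec y3)
              ≤ |y1 i * dot y2 ((Matrix.of (A i)).mulVec y3)| := le_abs_self _
            _ = |y1 i| * |dot y2 ((Matrix.of (A i)).mulVec y3)| := abs_mul _ _
            _ ≤ |y1 i| * lam := mul_le_mul_of_nonneg_left (hbound i) (abs_nonneg _)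
      _ = (∑ i, |y1 i|) * lam := by rw [Finset.sum_mul]
      _ ≤ (Real.sqrt (l0 y1) * enorm2 y1) * lam :=
          mul_le_mul_of_nonneg_right (l1_le_sqrt_l0 y1) hlam0
      _ = Real.sqrt (l0 y1) * lam := by rw [hy1, mul_one]
      _ ≤ Real.sqrt r1 * lam := by
          apply mul_le_mul_of_nonneg_right _ hlam0
          exact Real.sqrt_le_sqrt (by exact_mod_cast hl1)
  -- final chain
  rw [htri]
  have heq : Real.sqrt ((r2:ℝ) * r3 / ((n2:ℝ) * n3 * r1)) * Real.sqrt r1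
      = Real.sqrt ((r2:ℝ)/n2) * Real.sqrt ((r3:ℝ)/n3) := by
    rw [← Real.sqrt_mul (by positivity), ← Real.sqrt_mul (by positivity)]
    congr 1
    field_simp
  have key : Real.sqrt ((r2:ℝ) * r3 / ((n2:ℝ) * n3 * r1)) * (Real.sqrt r1 * lam) ≤ c1 := by
    have h1 : lam * Real.sqrt ((r3:ℝ)/n3) ≤ enorm2 w :=
      le_trans (mul_le_mul_of_nonneg_left hc3lb hlam0) hwlb
    have h2 : Real.sqrt ((r2:ℝ)/n2) * (lam * Real.sqrt ((r3:ℝ)/n3)) ≤ c2 :=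
      le_trans (mul_le_mul_of_nonneg_left h1 (Real.sqrt_nonneg _)) hc2lb
    calc Real.sqrt ((r2:ℝ) * r3 / ((n2:ℝ) * n3 * r1)) * (Real.sqrt r1 * lam)
        = (Real.sqrt ((r2:ℝ) * r3 / ((n2:ℝ) * n3 * r1)) * Real.sqrt r1) * lam := by ring
      _ = Real.sqrt ((r2:ℝ)/n2) * Real.sqrt ((r3:ℝ)/n3) * lam := by rw [heq]
      _ = Real.sqrt ((r2:ℝ)/n2) * (lam * Real.sqrt ((r3:ℝ)/n3)) := by ring
      _ ≤ c2 := h2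
      _ ≤ c1 := hc1ge
  calc Real.sqrt ((r2:ℝ) * r3 / ((n2:ℝ) * n3 * r1)) * tri A y1 y2 y3
      ≤ Real.sqrt ((r2:ℝ) * r3 / ((n2:ℝ) * n3 * r1)) * (Real.sqrt r1 * lam) :=
        mul_le_mul_of_nonneg_left hup (Real.sqrt_nonneg _)
    _ ≤ c1 := key
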